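/- arXiv:1403.0625 — 3 statements merged into one kernel-verified Lean document; each statement's English description precedes it below -/
import Mathlib

section
/- If p and q are probability densities on a measure space with p/q bounded, then the Kullback-Leibler divergence satisfies K(p,q) ≤ 2 h²(p,q) · ‖p/q‖_∞, where h²(p,q) = ∫(√p − √q)² dμ is the squared Hellinger distance. -/
open MeasureTheory Real

-- auxiliary lemmas

lemma log_ge_one_sub_inv {x : ℝ} (hx : 0 < x) : 1 - x⁻¹ ≤ Real.log x := by
  have h := Real.log_le_sub_one_of_pos (inv_pos.mpr hx)
  rw [Real.log_inv] at h; linarith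

lemma sub_one_le_mul_log {x : ℝ} (hx : 0 ≤ x) : x - 1 ≤ x * Real.log x := by
  rcases eq_or_lt_of_le hx with h | h
  · simp [← h]
  · have h1 := mul_le_mul_of_nonneg_left (log_ge_one_sub_inv h) hx
    have h2 : x * x⁻¹ = 1 := mul_inv_cancel₀ (ne_of_gt h)
    nlinarith

lemma psi_nonneg {s : ℝ} (h0 : 0 ≤ s) (h1 : s ≤ 1) :
    2 * s ^ 2 * Real.log s - s ^ 2 + 1 ≤ 2 * (s - 1) ^ 2 := by
  rcases eq_or_lt_of_le h0 with h | h
  · simp [← h]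
  · set F : ℝ → ℝ := fun x => 3 * x ^ 2 - 4 * x + 1 - 2 * (x ^ 2 * Real.log x) with hF
    have hder : ∀ x ∈ Set.Ioo s 1, HasDerivAt F (4 * x - 4 - 4 * (x * Real.log x)) x := by
      intro x hx
      have hx0 : 0 < x := lt_trans h hx.1
      have h1 : HasDerivAt (fun y : ℝ => y ^ 2) (2 * x) x := by
        simpa using hasDerivAt_pow 2 x
      have hlog : HasDerivAt Real.log x⁻¹ x := Real.hasDerivAt_log (ne_of_gt hx0)
      have hmul : HasDerivAt (fun y => y ^ 2 * Real.log y)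
          (2 * x * Real.log x + x ^ 2 * x⁻¹) x := h1.mul hlog
      have hpoly : HasDerivAt (fun y : ℝ => 3 * y ^ 2 - 4 * y + 1) (3 * (2 * x) - 4) x := by
        have := ((hasDerivAt_pow 2 x).const_mul 3).sub ((hasDerivAt_id x).const_mul 4)
        simpa using this.add_const 1
      have := hpoly.sub (hmul.const_mul 2)
      refine this.congr_deriv ?_
      rw [show x ^ 2 * x⁻¹ = x by rw [pow_two, mul_assoc, mul_inv_cancel₀ (ne_of_gt hx0), mul_one]]
      ring
    have hA : AntitoneOn F (Set.Icc s 1) := by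
      apply antitoneOn_of_deriv_nonpos (convex_Icc s 1)
      · have hsub : Set.Icc s 1 ⊆ {(0:ℝ)}ᶜ := by
          intro x hx; exact ne_of_gt (lt_of_lt_of_le h hx.1)
        have c1 : Continuous fun x : ℝ => 3 * x ^ 2 - 4 * x + 1 := by continuity
        have c2 : ContinuousOn (fun x => 2 * (x ^ 2 * Real.log x)) (Set.Icc s 1) :=
          continuousOn_const.mul ((continuousOn_pow 2).mul (Real.continuousOn_log.mono hsub))
        exact c1.continuousOn.sub c2
      · rw [interior_Icc]
        intro x hx
        exact (hder x hx).differentiableAt.differentiableWithinAt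
      · rw [interior_Icc]
        intro x hx
        rw [(hder x hx).deriv]
        have hx0 : 0 < x := lt_trans h hx.1
        have := sub_one_le_mul_log hx0.le
        linarith
    have key := hA (Set.mem_Icc.mpr ⟨le_refl s, h1⟩) (Set.mem_Icc.mpr ⟨h1.trans (le_refl 1), le_refl 1⟩) h1
    simp [hF] at key
    nlinarith [key]

lemma chi_nonneg {s : ℝ} (h1 : 1 ≤ s) :
    2 * s ^ 2 * Real.log s - s ^ 2 + 1 ≤ 2 * s ^ 2 * (s - 1) ^ 2 := by
  set G : ℝ → ℝ := fun x => 2 * (x ^ 2 * (x - 1) ^ 2) + x ^ 2 - 1 - 2 * (x ^ 2 * Real.log x) with hG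
  have hder : ∀ x ∈ Set.Ioo (1:ℝ) s, HasDerivAt G
      (4 * x * (x - 1) ^ 2 + 4 * x ^ 2 * (x - 1) - 4 * (x * Real.log x)) x := by
    intro x hx
    have hx0 : 0 < x := lt_trans one_pos hx.1
    have hsq : HasDerivAt (fun y : ℝ => y ^ 2) (2 * x) x := by simpa using hasDerivAt_pow 2 x
    have hsm : HasDerivAt (fun y : ℝ => (y - 1) ^ 2) (2 * (x - 1)) x := by
      have := ((hasDerivAt_id x).sub_const 1).pow 2
      simpa [Pi.pow_def] using this
    have hlog : HasDerivAt Real.log x⁻¹ x := Real.hasDerivAt_log (ne_of_gt hx0)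
    have hmul : HasDerivAt (fun y => y ^ 2 * Real.log y)
        (2 * x * Real.log x + x ^ 2 * x⁻¹) x := hsq.mul hlog
    have h2 : HasDerivAt (fun y : ℝ => y ^ 2 * (y - 1) ^ 2)
        (2 * x * (x - 1) ^ 2 + x ^ 2 * (2 * (x - 1))) x := hsq.mul hsm
    have := (((h2.const_mul 2).add hsq).sub_const 1).sub (hmul.const_mul 2)
    refine this.congr_deriv ?_
    rw [show x ^ 2 * x⁻¹ = x by rw [pow_two, mul_assoc, mul_inv_cancel₀ (ne_of_gt hx0), mul_one]]
    ring
  have hM : MonotoneOn G (Set.Icc 1 s) := by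
    apply monotoneOn_of_deriv_nonneg (convex_Icc 1 s)
    · have hsub : Set.Icc (1:ℝ) s ⊆ {(0:ℝ)}ᶜ := by
        intro x hx; exact ne_of_gt (lt_of_lt_of_le one_pos hx.1)
      have c1 : Continuous fun x : ℝ => 2 * (x ^ 2 * (x - 1) ^ 2) + x ^ 2 - 1 := by continuity
      have c2 : ContinuousOn (fun x => 2 * (x ^ 2 * Real.log x)) (Set.Icc 1 s) :=
        continuousOn_const.mul ((continuousOn_pow 2).mul (Real.continuousOn_log.mono hsub))
      exact c1.continuousOn.sub c2
    · rw [interior_Icc]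
      intro x hx
      exact (hder x hx).differentiableAt.differentiableWithinAt
    · rw [interior_Icc]
      intro x hx
      rw [(hder x hx).deriv]
      have hx1 : 1 ≤ x := hx.1.le
      have hlog := Real.log_le_sub_one_of_pos (lt_of_lt_of_le one_pos hx1)
      nlinarith
  have key := hM (Set.mem_Icc.mpr ⟨le_refl 1, h1⟩) (Set.mem_Icc.mpr ⟨h1, le_refl s⟩) h1
  simp [hG] at key
  nlinarith [key]

lemma phi_le {t : ℝ} (ht : 0 ≤ t) :
    t * Real.log t - t + 1 ≤ 2 * (Real.sqrt t - 1) ^ 2 * max t 1 := by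
  have hs0 : 0 ≤ Real.sqrt t := Real.sqrt_nonneg t
  have hst : Real.sqrt t ^ 2 = t := Real.sq_sqrt ht
  have hlog : Real.log t = 2 * Real.log (Real.sqrt t) := by
    rw [Real.log_sqrt ht]; ring
  rcases le_total (Real.sqrt t) 1 with h | h
  · have ht1 : t ≤ 1 := by nlinarith
    rw [max_eq_right ht1, hlog]
    have hpsi := psi_nonneg hs0 h
    have e1 : t * Real.log (Real.sqrt t) = Real.sqrt t ^ 2 * Real.log (Real.sqrt t) := by
      rw [hst]
    linarith
  · have ht1 : 1 ≤ t := by nlinarith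
    rw [max_eq_left ht1, hlog]
    have hchi := chi_nonneg h
    have e1 : t * Real.log (Real.sqrt t) = Real.sqrt t ^ 2 * Real.log (Real.sqrt t) := by
      rw [hst]
    have e2 : (Real.sqrt t - 1) ^ 2 * t = (Real.sqrt t - 1) ^ 2 * Real.sqrt t ^ 2 := by
      rw [hst]
    nlinarith

lemma pointwise_bound {a b B : ℝ} (ha : 0 ≤ a) (hb : 0 < b) (hB : a / b ≤ B) (hB1 : 1 ≤ B) :
    0 ≤ a * Real.log (a / b) + b - a ∧
      a * Real.log (a / b) + b - a ≤ 2 * B * (Real.sqrt a - Real.sqrt b) ^ 2 := by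
  set t : ℝ := a / b with htdef
  have ht0 : 0 ≤ t := div_nonneg ha hb.le
  have hab : a = t * b := by rw [htdef, div_mul_cancel₀ _ (ne_of_gt hb)]
  have hplog : a * Real.log t + b - a = b * (t * Real.log t - t + 1) := by
    rw [hab]; ring
  have hsb : Real.sqrt b ^ 2 = b := Real.sq_sqrt hb.le
  have hsab : (Real.sqrt a - Real.sqrt b) ^ 2 = b * (Real.sqrt t - 1) ^ 2 := by
    rw [hab, Real.sqrt_mul ht0]
    linear_combination (Real.sqrt t - 1) ^ 2 * hsb
  constructor
  · rw [hplog]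
    have := sub_one_le_mul_log ht0
    nlinarith
  · rw [hplog, hsab]
    have hphi := phi_le ht0
    have hmax : max t 1 ≤ B := max_le hB hB1
    have hsq2 : (0:ℝ) ≤ 2 * (Real.sqrt t - 1) ^ 2 := by positivity
    have h1 : t * Real.log t - t + 1 ≤ 2 * (Real.sqrt t - 1) ^ 2 * B :=
      hphi.trans (mul_le_mul_of_nonneg_left hmax hsq2)
    calc b * (t * Real.log t - t + 1) ≤ b * (2 * (Real.sqrt t - 1) ^ 2 * B) :=
          mul_le_mul_of_nonneg_left h1 hb.le
      _ = 2 * B * (b * (Real.sqrt t - 1) ^ 2) := by ring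


/-- If `p` and `q` are probability densities with `p/q` essentially bounded, then
the Kullback-Leibler divergence satisfies `K(p,q) ≤ 2 h²(p,q) · ‖p/q‖_∞`. -/
theorem kl_le_two_hellinger_mul_essSup
    {Ω : Type*} [MeasurableSpace Ω] (μ : Measure Ω) (p q : Ω → ℝ)
    (hp : Measurable p) (hq : Measurable q)
    (hp0 : ∀ x, 0 ≤ p x) (hq0 : ∀ᵐ x ∂μ, 0 < q x)
    (hpint : ∫ x, p x ∂μ = 1) (hqint : ∫ x, q x ∂μ = 1)
    (hbdd : ∃ B : ℝ, ∀ᵐ x ∂μ, p x / q x ≤ B) :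
    ∫ x, p x * Real.log (p x / q x) ∂μ ≤
      2 * (∫ x, (Real.sqrt (p x) - Real.sqrt (q x)) ^ 2 ∂μ) *
        essSup (fun x => p x / q x) μ := by
  obtain ⟨B0, hB0⟩ := hbdd
  set B := essSup (fun x => p x / q x) μ with hBdef
  have hfB : ∀ᵐ x ∂μ, p x / q x ≤ B := ae_le_essSup ⟨B0, by simpa using hB0⟩
  have hpInt : Integrable p μ := by
    by_contra h; rw [integral_undef h] at hpint; norm_num at hpint
  have hqInt : Integrable q μ := by
    by_contra h; rw [integral_undef h] at hqint; norm_num at hqint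
  have hB1 : 1 ≤ B := by
    have hle : ∀ᵐ x ∂μ, p x ≤ B * q x := by
      filter_upwards [hq0, hfB] with x hqx hfx
      rw [div_le_iff₀ hqx] at hfx
      linarith
    have := integral_mono_ae hpInt (hqInt.const_mul B) hle
    rwa [hpint, integral_const_mul, hqint, mul_one] at this
  set h2f : Ω → ℝ := fun x => (Real.sqrt (p x) - Real.sqrt (q x)) ^ 2 with hh2f
  have h2meas : Measurable h2f :=
    ((Real.continuous_sqrt.measurable.comp hp).sub
      (Real.continuous_sqrt.measurable.comp hq)).pow_const 2
  have h2int : Integrable h2f μ := by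
    apply (hpInt.add hqInt).mono' h2meas.aestronglyMeasurable
    filter_upwards [hq0] with x hqx
    have hsp := Real.sq_sqrt (hp0 x)
    have hsq := Real.sq_sqrt hqx.le
    have h1 := Real.sqrt_nonneg (p x)
    have h2 := Real.sqrt_nonneg (q x)
    rw [Real.norm_eq_abs, abs_of_nonneg (sq_nonneg _)]
    simp only [hh2f, Pi.add_apply]
    nlinarith
  set g : Ω → ℝ := fun x => p x * Real.log (p x / q x) + q x - p x with hg
  have hgmeas : Measurable g :=
    ((hp.mul (Real.measurable_log.comp (hp.div hq))).add hq).sub hp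
  have hkey : ∀ᵐ x ∂μ, 0 ≤ g x ∧ g x ≤ 2 * B * h2f x := by
    filter_upwards [hq0, hfB] with x hqx hfx
    simpa only [hg, hh2f] using pointwise_bound (hp0 x) hqx hfx hB1
  have hgInt : Integrable g μ := by
    apply (h2int.const_mul (2 * B)).mono' hgmeas.aestronglyMeasurable
    filter_upwards [hkey] with x hx
    rw [Real.norm_eq_abs, abs_of_nonneg hx.1]
    exact hx.2
  have hplogInt : Integrable (fun x => p x * Real.log (p x / q x)) μ := by
    refine ((hgInt.add hpInt).sub hqInt).congr (ae_of_all _ fun x => ?_)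
    simp only [Pi.add_apply, Pi.sub_apply, hg]
    ring
  have hgint_eq : ∫ x, g x ∂μ = ∫ x, p x * Real.log (p x / q x) ∂μ := by
    have hadd : Integrable (fun x => p x * Real.log (p x / q x) + q x) μ :=
      hplogInt.add hqInt
    calc ∫ x, g x ∂μ = ∫ x, (p x * Real.log (p x / q x) + q x) - p x ∂μ := by
          simp only [hg]
      _ = (∫ x, p x * Real.log (p x / q x) + q x ∂μ) - ∫ x, p x ∂μ :=
          integral_sub hadd hpInt
      _ = ((∫ x, p x * Real.log (p x / q x) ∂μ) + ∫ x, q x ∂μ) - ∫ x, p x ∂μ := by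
          rw [integral_add hplogInt hqInt]
      _ = ∫ x, p x * Real.log (p x / q x) ∂μ := by rw [hpint, hqint]; ring
  have hmono : ∫ x, g x ∂μ ≤ ∫ x, 2 * B * h2f x ∂μ :=
    integral_mono_ae hgInt (h2int.const_mul (2 * B)) (hkey.mono fun x hx => hx.2)
  rw [integral_const_mul] at hmono
  rw [← hgint_eq]
  calc ∫ x, g x ∂μ ≤ 2 * B * ∫ x, h2f x ∂μ := hmono
    _ = 2 * (∫ x, h2f x ∂μ) * B := by ring
end

section
/- If log Ψ is Lipschitz with constant L, then the normalized densities p_w = Ψ(w)/∫Ψ(w) satisfy ‖p_{w₁} − p_{w₂}‖₁ ≤ 2L‖w₁ − w₂‖_∞ · exp(L‖w₁ − w₂‖_∞). -/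
open MeasureTheory Real

lemma abs_exp_sub_one_le_mul (a : ℝ) : |Real.exp a - 1| ≤ |a| * Real.exp |a| := by
  rcases le_or_gt 0 a with h | h
  · rw [abs_of_nonneg h, abs_of_nonneg (by nlinarith [Real.add_one_le_exp a] : (0:ℝ) ≤ Real.exp a - 1)]
    have h1 : 1 + (-a) ≤ Real.exp (-a) := by nlinarith [Real.add_one_le_exp (-a)]
    have h2 : Real.exp (-a) * Real.exp a = 1 := by
      rw [← Real.exp_add]; simp
    nlinarith [Real.exp_pos a]
  · rw [abs_of_neg h, abs_of_nonpos (by nlinarith [Real.exp_lt_one_iff.mpr h] : Real.exp a - 1 ≤ 0)]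
    have h1 : a + 1 ≤ Real.exp a := Real.add_one_le_exp a
    have h2 : (1:ℝ) ≤ Real.exp (-a) := by
      rw [Real.one_le_exp_iff]; linarith
    nlinarith [Real.exp_pos a]

/-- If `log Ψ` is Lipschitz with constant `L`, the normalized densities
`p_w = Ψ(w)/∫Ψ(w)` satisfy `‖p_{w₁} - p_{w₂}‖₁ ≤ 2 L ‖w₁-w₂‖_∞ exp(L ‖w₁-w₂‖_∞)`. -/
theorem normalized_density_L1_bound_logLipschitz
    (Ψ : ℝ → ℝ) (hΨpos : ∀ t, 0 < Ψ t) (L : NNReal)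
    (hLip : LipschitzWith L (fun t => Real.log (Ψ t)))
    (w₁ w₂ : ℝ → ℝ)
    (hi₁ : IntegrableOn (fun x => Ψ (w₁ x)) (Set.Icc (0:ℝ) 1))
    (hi₂ : IntegrableOn (fun x => Ψ (w₂ x)) (Set.Icc (0:ℝ) 1))
    (D : ℝ) (hD : ∀ x ∈ Set.Icc (0:ℝ) 1, |w₁ x - w₂ x| ≤ D) :
    ∫ x in Set.Icc (0:ℝ) 1,
        |Ψ (w₁ x) / (∫ y in Set.Icc (0:ℝ) 1, Ψ (w₁ y)) -
          Ψ (w₂ x) / (∫ y in Set.Icc (0:ℝ) 1, Ψ (w₂ y))| ≤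
      2 * L * D * Real.exp (L * D) := by
  set I₁ := ∫ y in Set.Icc (0:ℝ) 1, Ψ (w₁ y) with hI₁def
  set I₂ := ∫ y in Set.Icc (0:ℝ) 1, Ψ (w₂ y) with hI₂def
  have hD0 : 0 ≤ D := le_trans (abs_nonneg _) (hD 0 (by norm_num))
  set K : ℝ := L * D * Real.exp (L * D) with hKdef
  have hK0 : (0:ℝ) ≤ K := by positivity
  -- positivity of the integrals
  have hIpos : ∀ (w : ℝ → ℝ), IntegrableOn (fun x => Ψ (w x)) (Set.Icc (0:ℝ) 1) →
      0 < ∫ y in Set.Icc (0:ℝ) 1, Ψ (w y) := by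
    intro w hi
    rw [setIntegral_pos_iff_support_of_nonneg_ae
      (Filter.Eventually.of_forall fun x => (hΨpos (w x)).le) hi]
    have : Function.support (fun x => Ψ (w x)) = Set.univ := by
      ext x; simp [Function.support, (hΨpos (w x)).ne']
    rw [this, Set.univ_inter]
    simp [Real.volume_Icc]
  have hI₁pos : 0 < I₁ := hIpos w₁ hi₁
  have hI₂pos : 0 < I₂ := hIpos w₂ hi₂
  -- pointwise bound
  have hpt : ∀ x ∈ Set.Icc (0:ℝ) 1, |Ψ (w₁ x) - Ψ (w₂ x)| ≤ K * Ψ (w₁ x) := by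
    intro x hx
    set a : ℝ := Real.log (Ψ (w₂ x)) - Real.log (Ψ (w₁ x)) with hadef
    have ha : |a| ≤ L * D := by
      have := hLip.dist_le_mul (w₂ x) (w₁ x)
      rw [Real.dist_eq, Real.dist_eq] at this
      have h2 : |w₂ x - w₁ x| ≤ D := by rw [abs_sub_comm]; exact hD x hx
      calc |a| ≤ L * |w₂ x - w₁ x| := this
        _ ≤ L * D := by gcongr
    have hΨeq : Ψ (w₂ x) = Ψ (w₁ x) * Real.exp a := by
      rw [hadef, Real.exp_sub, Real.exp_log (hΨpos _), Real.exp_log (hΨpos _),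
        mul_comm, div_mul_cancel₀ _ (hΨpos (w₁ x)).ne']
    have h1 : |Ψ (w₁ x) - Ψ (w₂ x)| = Ψ (w₁ x) * |Real.exp a - 1| := by
      have h0 : Ψ (w₁ x) - Ψ (w₂ x) = Ψ (w₁ x) * (1 - Real.exp a) := by rw [hΨeq]; ring
      rw [h0, abs_mul, abs_of_pos (hΨpos _), abs_sub_comm]
    rw [h1]
    have h2 : |Real.exp a - 1| ≤ |a| * Real.exp |a| := abs_exp_sub_one_le_mul a
    have h3 : |a| * Real.exp |a| ≤ (L * D) * Real.exp (L * D) := by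
      have := Real.exp_le_exp.mpr ha
      nlinarith [abs_nonneg a, Real.exp_pos |a|]
    calc Ψ (w₁ x) * |Real.exp a - 1| ≤ Ψ (w₁ x) * K := by
          rw [hKdef]; exact mul_le_mul_of_nonneg_left (h2.trans h3) (hΨpos _).le
      _ = K * Ψ (w₁ x) := mul_comm _ _
  -- integrability facts
  have hsub : IntegrableOn (fun x => Ψ (w₁ x) - Ψ (w₂ x)) (Set.Icc (0:ℝ) 1) := hi₁.sub hi₂
  have habs : IntegrableOn (fun x => |Ψ (w₁ x) - Ψ (w₂ x)|) (Set.Icc (0:ℝ) 1) := hsub.abs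
  -- integral of |Ψ₁ - Ψ₂| bound
  have hIabs : (∫ x in Set.Icc (0:ℝ) 1, |Ψ (w₁ x) - Ψ (w₂ x)|) ≤ K * I₁ := by
    calc (∫ x in Set.Icc (0:ℝ) 1, |Ψ (w₁ x) - Ψ (w₂ x)|)
        ≤ ∫ x in Set.Icc (0:ℝ) 1, K * Ψ (w₁ x) :=
          setIntegral_mono_on habs (hi₁.const_mul K) measurableSet_Icc hpt
      _ = K * I₁ := by rw [integral_const_mul]
  have hId : |I₁ - I₂| ≤ K * I₁ := by
    have h1 : I₁ - I₂ = ∫ x in Set.Icc (0:ℝ) 1, (Ψ (w₁ x) - Ψ (w₂ x)) :=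
      (integral_sub hi₁ hi₂).symm
    rw [h1]
    calc |∫ x in Set.Icc (0:ℝ) 1, (Ψ (w₁ x) - Ψ (w₂ x))|
        ≤ ∫ x in Set.Icc (0:ℝ) 1, |Ψ (w₁ x) - Ψ (w₂ x)| := by
          simpa [Real.norm_eq_abs] using
            norm_integral_le_integral_norm (μ := volume.restrict (Set.Icc (0:ℝ) 1))
              (f := fun x => Ψ (w₁ x) - Ψ (w₂ x))
      _ ≤ K * I₁ := hIabs
  -- pointwise bound on the final integrand
  have hkey : ∀ x ∈ Set.Icc (0:ℝ) 1,
      |Ψ (w₁ x) / I₁ - Ψ (w₂ x) / I₂| ≤ |Ψ (w₁ x) - Ψ (w₂ x)| / I₁ + Ψ (w₂ x) * (K / I₂) := by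
    intro x hx
    have hsplit : Ψ (w₁ x) / I₁ - Ψ (w₂ x) / I₂
        = (Ψ (w₁ x) - Ψ (w₂ x)) / I₁ + Ψ (w₂ x) * ((I₂ - I₁) / (I₁ * I₂)) := by
      field_simp
      ring
    rw [hsplit]
    calc |(Ψ (w₁ x) - Ψ (w₂ x)) / I₁ + Ψ (w₂ x) * ((I₂ - I₁) / (I₁ * I₂))|
        ≤ |(Ψ (w₁ x) - Ψ (w₂ x)) / I₁| + |Ψ (w₂ x) * ((I₂ - I₁) / (I₁ * I₂))| := abs_add_le _ _
      _ = |Ψ (w₁ x) - Ψ (w₂ x)| / I₁ + Ψ (w₂ x) * (|I₂ - I₁| / (I₁ * I₂)) := by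
          rw [abs_div, abs_mul, abs_div, abs_of_pos hI₁pos,
            abs_of_pos (hΨpos _), abs_of_pos (mul_pos hI₁pos hI₂pos)]
      _ ≤ |Ψ (w₁ x) - Ψ (w₂ x)| / I₁ + Ψ (w₂ x) * ((K * I₁) / (I₁ * I₂)) := by
          gcongr
          · exact (hΨpos _).le
          · rw [abs_sub_comm]; exact hId
      _ = |Ψ (w₁ x) - Ψ (w₂ x)| / I₁ + Ψ (w₂ x) * (K / I₂) := by
          rw [mul_comm I₁ I₂, mul_div_mul_right _ _ hI₁pos.ne']
  -- put everything together
  have hp₁ : IntegrableOn (fun x => Ψ (w₁ x) / I₁ - Ψ (w₂ x) / I₂) (Set.Icc (0:ℝ) 1) :=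
    (hi₁.div_const I₁).sub (hi₂.div_const I₂)
  have hbint : IntegrableOn (fun x => |Ψ (w₁ x) - Ψ (w₂ x)| / I₁ + Ψ (w₂ x) * (K / I₂))
      (Set.Icc (0:ℝ) 1) := (habs.div_const I₁).add (hi₂.mul_const _)
  calc ∫ x in Set.Icc (0:ℝ) 1, |Ψ (w₁ x) / I₁ - Ψ (w₂ x) / I₂|
      ≤ ∫ x in Set.Icc (0:ℝ) 1, (|Ψ (w₁ x) - Ψ (w₂ x)| / I₁ + Ψ (w₂ x) * (K / I₂)) :=
        setIntegral_mono_on hp₁.abs hbint measurableSet_Icc hkey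
    _ = (∫ x in Set.Icc (0:ℝ) 1, |Ψ (w₁ x) - Ψ (w₂ x)|) / I₁ + I₂ * (K / I₂) := by
        rw [integral_add (habs.div_const I₁) (hi₂.mul_const _), integral_div,
          integral_mul_const]
    _ ≤ (K * I₁) / I₁ + I₂ * (K / I₂) := by gcongr
    _ = K + K := by
        rw [mul_div_assoc, div_self hI₁pos.ne', mul_div_assoc', mul_comm I₂ K,
          mul_div_assoc, div_self hI₂pos.ne']
        ring
    _ = 2 * L * D * Real.exp (L * D) := by rw [hKdef]; ring
end

section
/- For two Poisson distributions with means λ, μ ∈ (0,1], the squared Hellinger distance is bounded by the absolute difference of the means: h²(Poi(λ), Poi(μ)) ≤ |λ − μ|. -/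
open Real

/-- The Poisson probability mass function with mean `l` at `k`. -/
noncomputable def poiPMF (l : ℝ) (k : ℕ) : ℝ := Real.exp (-l) * l ^ k / (Nat.factorial k)

lemma sqrt_pow_aux (x : ℝ) (hx : 0 ≤ x) (n : ℕ) : Real.sqrt (x ^ n) = Real.sqrt x ^ n := by
  rw [show x ^ n = (Real.sqrt x ^ n) ^ 2 by rw [← pow_mul, mul_comm, pow_mul, Real.sq_sqrt hx],
    Real.sqrt_sq (by positivity)]

lemma sqrt_poiPMF (l : ℝ) (hl : 0 ≤ l) (k : ℕ) :
    Real.sqrt (poiPMF l k) =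
      Real.exp (-l / 2) * Real.sqrt l ^ k / Real.sqrt (Nat.factorial k) := by
  have he : Real.exp (-l) = Real.exp (-l / 2) ^ 2 := by
    rw [← Real.exp_nat_mul]; ring_nf
  rw [poiPMF, Real.sqrt_div' _ (by positivity), he, Real.sqrt_mul (by positivity),
    Real.sqrt_sq (Real.exp_pos _).le, sqrt_pow_aux l hl]

lemma tsumExpAux (x : ℝ) : ∑' n : ℕ, x ^ n / n.factorial = Real.exp x := by
  rw [Real.exp_eq_exp_ℝ, NormedSpace.exp_eq_tsum_div]

lemma summable_poiPMF (l : ℝ) : Summable (fun k : ℕ => poiPMF l k) := by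
  unfold poiPMF
  simp_rw [mul_div_assoc]
  exact (Real.summable_pow_div_factorial l).mul_left _

lemma tsum_poiPMF (l : ℝ) : ∑' k : ℕ, poiPMF l k = 1 := by
  unfold poiPMF
  simp_rw [mul_div_assoc]
  rw [tsum_mul_left, tsumExpAux, ← Real.exp_add]
  simp

lemma poiPMF_nonneg (l : ℝ) (hl : 0 ≤ l) (k : ℕ) : 0 ≤ poiPMF l k := by
  unfold poiPMF; positivity

/-- For Poisson distributions with means `λ, μ ∈ (0,1]`,
`h²(Poi(λ), Poi(μ)) ≤ |λ - μ|`. -/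
theorem hellinger_sq_poisson_le_of_le_one
    (lam mu : ℝ) (hlam0 : 0 < lam) (hlam : lam ≤ 1) (hmu0 : 0 < mu) (hmu : mu ≤ 1) :
    ∑' k : ℕ, (Real.sqrt (poiPMF lam k) - Real.sqrt (poiPMF mu k)) ^ 2 ≤ |lam - mu| := by
  set x := Real.sqrt lam with hx
  set y := Real.sqrt mu with hy
  have hx2 : x ^ 2 = lam := Real.sq_sqrt hlam0.le
  have hy2 : y ^ 2 = mu := Real.sq_sqrt hmu0.le
  have hx0 : 0 ≤ x := Real.sqrt_nonneg _
  have hy0 : 0 ≤ y := Real.sqrt_nonneg _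
  -- cross term formula
  have hcross : ∀ k : ℕ, Real.sqrt (poiPMF lam k) * Real.sqrt (poiPMF mu k)
      = Real.exp (-(lam + mu) / 2) * ((x * y) ^ k / Nat.factorial k) := by
    intro k
    rw [sqrt_poiPMF lam hlam0.le, sqrt_poiPMF mu hmu0.le, div_mul_div_comm,
      Real.mul_self_sqrt (by positivity), mul_mul_mul_comm, ← Real.exp_add, mul_pow,
      show -lam / 2 + -mu / 2 = -(lam + mu) / 2 by ring, mul_div_assoc]
  have hcsum : Summable (fun k : ℕ => Real.exp (-(lam + mu) / 2) * ((x * y) ^ k / Nat.factorial k)) :=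
    (Real.summable_pow_div_factorial (x * y)).mul_left _
  have hcval : ∑' k : ℕ, Real.exp (-(lam + mu) / 2) * ((x * y) ^ k / Nat.factorial k)
      = Real.exp (-(lam + mu) / 2 + x * y) := by
    rw [tsum_mul_left, tsumExpAux, ← Real.exp_add]
  -- expand the square
  have hfun : ∀ k : ℕ, (Real.sqrt (poiPMF lam k) - Real.sqrt (poiPMF mu k)) ^ 2
      = (poiPMF lam k + poiPMF mu k)
        - 2 * (Real.exp (-(lam + mu) / 2) * ((x * y) ^ k / Nat.factorial k)) := by
    intro k
    rw [← hcross k, sub_sq, Real.sq_sqrt (poiPMF_nonneg lam hlam0.le k),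
      Real.sq_sqrt (poiPMF_nonneg mu hmu0.le k)]
    ring
  have hsum1 : Summable (fun k : ℕ => poiPMF lam k + poiPMF mu k) :=
    (summable_poiPMF lam).add (summable_poiPMF mu)
  have hval : ∑' k : ℕ, (Real.sqrt (poiPMF lam k) - Real.sqrt (poiPMF mu k)) ^ 2
      = 2 - 2 * Real.exp (-(lam + mu) / 2 + x * y) := by
    rw [tsum_congr hfun, Summable.tsum_sub hsum1 (hcsum.mul_left 2),
      Summable.tsum_add (summable_poiPMF lam) (summable_poiPMF mu), tsum_poiPMF, tsum_poiPMF,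
      tsum_mul_left, hcval]
    norm_num
  rw [hval]
  -- final elementary inequality
  have ht : -(lam + mu) / 2 + x * y = -((x - y) ^ 2 / 2) := by
    rw [← hx2, ← hy2]; ring
  rw [ht]
  have h1 : 1 + -((x - y) ^ 2 / 2) ≤ Real.exp (-((x - y) ^ 2 / 2)) := by
    have := Real.add_one_le_exp (-((x - y) ^ 2 / 2)); linarith
  have h2 : (x - y) ^ 2 ≤ |lam - mu| := by
    have key : ∀ a b : ℝ, 0 ≤ b → b ≤ a → (a - b) ^ 2 ≤ a ^ 2 - b ^ 2 := by
      intro a b hb hba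
      nlinarith [mul_nonneg hb (sub_nonneg.2 hba)]
    rcases le_total mu lam with hc | hc
    · have hyx : y ≤ x := Real.sqrt_le_sqrt hc
      rw [abs_of_nonneg (by linarith), ← hx2, ← hy2]
      exact key x y hy0 hyx
    · have hyx : x ≤ y := Real.sqrt_le_sqrt hc
      rw [abs_of_nonpos (by linarith), show (x - y) ^ 2 = (y - x) ^ 2 by ring, ← hx2, ← hy2]
      have := key y x hx0 hyx
      linarith
  linarith
end
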